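/- In a braided crossed G-category, if there exists an object X of degree e with γ_g(X) not isomorphic to X, then there is no invertible object of degree g. -/
import Mathlib


open CategoryTheory MonoidalCategory

universe v u

/-- A braided crossed `G`-category: a monoidal category with a `G`-grading on objects,
a compatible monoidal `G`-action, and a crossed braiding. -/
structure BraidedCrossedGCat (G : Type*) [Group G] (C : Type u) [Category.{v} C]
    [MonoidalCategory C] where
  deg : C → G
  deg_tensor : ∀ X Y : C, deg (X ⊗ Y) = deg X * deg Y
  deg_unit : deg (𝟙_ C) = 1
  deg_iso : ∀ {X Y : C}, (X ≅ Y) → deg X = deg Y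
  act : G → C ⥤ C
  actOne : act 1 ≅ Functor.id C
  actMul : ∀ g h : G, act (g * h) ≅ act h ⋙ act g
  actTensor : ∀ (g : G) (X Y : C), (act g).obj (X ⊗ Y) ≅ (act g).obj X ⊗ (act g).obj Y
  act_deg : ∀ (g : G) (X : C), deg ((act g).obj X) = g * deg X * g⁻¹
  braiding : ∀ X Y : C, X ⊗ Y ≅ (act (deg X)).obj Y ⊗ X
  braiding_natural_right : ∀ (X : C) {Y Y' : C} (t : Y ⟶ Y'),
    (X ◁ t) ≫ (braiding X Y').hom = (braiding X Y).hom ≫ ((act (deg X)).map t ▷ X)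
  braiding_natural_left : ∀ {X X' : C} (s : X ⟶ X') (Y : C) (h : deg X = deg X'),
    (s ▷ Y) ≫ (braiding X' Y).hom =
      (braiding X Y).hom ≫ (eqToHom (by rw [h]) ▷ X) ≫ ((act (deg X')).obj Y ◁ s)
  hexagon₁ : ∀ X Z T : C,
    (braiding X (Z ⊗ T)).hom ≫ ((actTensor (deg X) Z T).hom ▷ X) =
      (α_ X Z T).inv ≫ ((braiding X Z).hom ▷ T) ≫
        (α_ ((act (deg X)).obj Z) X T).hom ≫
        ((act (deg X)).obj Z ◁ (braiding X T).hom) ≫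
        (α_ ((act (deg X)).obj Z) ((act (deg X)).obj T) X).inv
  hexagon₂ : ∀ X Y Z : C,
    (braiding (X ⊗ Y) Z).hom ≫
      ((eqToHom (by rw [deg_tensor]) ≫ (actMul (deg X) (deg Y)).hom.app Z) ▷ (X ⊗ Y)) =
      (α_ X Y Z).hom ≫ (X ◁ (braiding Y Z).hom) ≫
        (α_ X ((act (deg Y)).obj Z) Y).inv ≫
        ((braiding X ((act (deg Y)).obj Z)).hom ▷ Y) ≫
        (α_ ((act (deg X)).obj ((act (deg Y)).obj Z)) X Y).hom
  braiding_equivariant : ∀ (k : G) (X Y : C),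
    (actTensor k X Y).inv ≫ (act k).map (braiding X Y).hom ≫
      (actTensor k ((act (deg X)).obj Y) X).hom =
    (braiding ((act k).obj X) ((act k).obj Y)).hom ≫
      ((eqToHom (by rw [act_deg]; rfl) ≫ (actMul (k * deg X * k⁻¹) k).inv.app Y ≫
        eqToHom (by rw [inv_mul_cancel_right]) ≫ (actMul k (deg X)).hom.app Y) ▷
        (act k).obj X)

/-- An object of a monoidal category is invertible if it has a tensor-inverse. -/
def IsInvObj {C : Type u} [Category.{v} C] [MonoidalCategory C] (Y : C) : Prop :=
  ∃ Y' : C, Nonempty (Y ⊗ Y' ≅ 𝟙_ C) ∧ Nonempty (Y' ⊗ Y ≅ 𝟙_ C)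

/-- In a braided crossed `G`-category, if there exists an object `X` of
degree `e` with `γ_g(X) ≇ X`, then there is no invertible object of degree `g`. -/
theorem stmt_1 {G : Type*} [Group G] {C : Type u} [Category.{v} C] [MonoidalCategory C]
    (B : BraidedCrossedGCat G C) (g : G)
    (hX : ∃ X : C, B.deg X = 1 ∧ IsEmpty ((B.act g).obj X ≅ X)) :
    ¬ ∃ Y : C, B.deg Y = g ∧ IsInvObj Y := by
  rintro ⟨Y, hdeg, Y', ⟨⟨e1⟩, ⟨e2⟩⟩⟩
  obtain ⟨X, hX1, hempty⟩ := hX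
  apply hempty.false
  calc (B.act g).obj X
      ≅ (B.act (B.deg Y)).obj X := eqToIso (by rw [hdeg])
    _ ≅ (B.act (B.deg Y)).obj X ⊗ 𝟙_ C := (ρ_ _).symm
    _ ≅ (B.act (B.deg Y)).obj X ⊗ (Y ⊗ Y') := whiskerLeftIso _ e1.symm
    _ ≅ ((B.act (B.deg Y)).obj X ⊗ Y) ⊗ Y' := (α_ _ _ _).symm
    _ ≅ (Y ⊗ X) ⊗ Y' := whiskerRightIso (B.braiding Y X).symm _
    _ ≅ Y ⊗ (X ⊗ Y') := α_ _ _ _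
    _ ≅ Y ⊗ ((B.act (B.deg X)).obj Y' ⊗ X) := whiskerLeftIso _ (B.braiding X Y')
    _ ≅ Y ⊗ ((B.act 1).obj Y' ⊗ X) := eqToIso (by rw [hX1])
    _ ≅ Y ⊗ (Y' ⊗ X) := whiskerLeftIso _ (whiskerRightIso (B.actOne.app Y') _)
    _ ≅ (Y ⊗ Y') ⊗ X := (α_ _ _ _).symm
    _ ≅ 𝟙_ C ⊗ X := whiskerRightIso e1 _
    _ ≅ X := λ_ _
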